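/- arXiv:2008.02730 — 5 statements merged into one kernel-verified Lean document; each statement's English description precedes it below -/
import Mathlib

section
/- For a bipartite pure state ρ = |ψ⟩⟨ψ| on H_j ⊗ H_k with dimensions d_j ≤ d_k, the Bloch vectors satisfy the exact relation ‖T^{(jk)}‖² = 4(d_j² − 1)/d_j² − (2(d_j + d_k)/(d_j d_k)) ‖T^{(j)}‖², where T^{(j)} is the Bloch vector of the reduced state ρ_j and T^{(jk)} is the correlation tensor with entries Tr(ρ λ_{i_j} ⊗ λ_{i_k}). -/
open Matrix BigOperators ComplexOrder Kronecker

section helpers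

lemma parseval_aux {n ι : Type*} [Fintype n] [DecidableEq n] [Fintype ι] [DecidableEq ι]
    (e : ι → Matrix n n ℂ) (herm : ∀ i, (e i).IsHermitian)
    (c : ι → ℂ) (hc : ∀ i, c i ≠ 0) (hcr : ∀ i, star (c i) = c i)
    (orth : ∀ i j, (e i * e j).trace = if i = j then c i else 0)
    (hcard : Fintype.card ι = Fintype.card n * Fintype.card n)
    (X : Matrix n n ℂ) :
    (Xᴴ * X).trace = ∑ i, star ((e i * X).trace) * ((e i * X).trace) / c i := by
  have li : LinearIndependent ℂ e := by
    rw [Fintype.linearIndependent_iff]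
    intro g hg j
    have h0 : (e j * ∑ i, g i • e i).trace = 0 := by rw [hg, mul_zero, trace_zero]
    rw [Finset.mul_sum] at h0
    simp only [Matrix.mul_smul, trace_sum, trace_smul, orth, smul_eq_mul, mul_ite, mul_zero,
      Finset.sum_ite_eq, Finset.mem_univ, if_true] at h0
    exact (mul_eq_zero.mp h0).resolve_right (hc j)
  have hspan : X ∈ Submodule.span ℂ (Set.range e) := by
    rw [li.span_eq_top_of_card_eq_finrank' (by simp [hcard, Module.finrank_matrix])]
    trivial
  obtain ⟨g, hg⟩ := (Submodule.mem_span_range_iff_exists_fun ℂ).mp hspan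
  have key : ∀ j, (e j * X).trace = g j * c j := by
    intro j
    rw [← hg, Finset.mul_sum]
    simp only [Matrix.mul_smul, trace_sum, trace_smul, orth, smul_eq_mul, mul_ite, mul_zero,
      Finset.sum_ite_eq, Finset.mem_univ, if_true]
  have hXH : Xᴴ = ∑ i, star (g i) • e i := by
    rw [← hg, conjTranspose_sum]
    refine Finset.sum_congr rfl fun i _ => ?_
    rw [conjTranspose_smul, (herm i).eq]
  calc (Xᴴ * X).trace = ∑ i, star (g i) * ((e i * X).trace) := by
        rw [hXH, Finset.sum_mul]
        simp only [smul_mul_assoc, trace_sum, trace_smul, smul_eq_mul]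
    _ = ∑ i, star ((e i * X).trace) * ((e i * X).trace) / c i := by
        refine Finset.sum_congr rfl fun i _ => ?_
        rw [key i, star_mul', hcr, eq_div_iff (hc i)]
        ring


lemma star_mul_self_eq_normsq (z : ℂ) : star z * z = ((‖z‖^2 : ℝ) : ℂ) := by
  rw [Complex.star_def, mul_comm, Complex.mul_conj, Complex.normSq_eq_norm_sq]

lemma kron_isHermitian {m n : Type*} [Fintype m] [Fintype n]
    {A : Matrix m m ℂ} {B : Matrix n n ℂ} (hA : A.IsHermitian) (hB : B.IsHermitian) :
    (A ⊗ₖ B).IsHermitian := by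
  show (A ⊗ₖ B)ᴴ = A ⊗ₖ B
  ext ⟨a, b⟩ ⟨c, d⟩
  simp only [conjTranspose_apply, kroneckerMap_apply, star_mul', mul_comm,
    hA.apply, hB.apply]

/-- orthogonality of the extended family (traceless orthogonal family plus identity) -/
lemma elim_orth {n : ℕ} (lam : Fin (n^2-1) → Matrix (Fin n) (Fin n) ℂ)
    (htr0 : ∀ i, (lam i).trace = 0)
    (horth : ∀ i j, (lam i * lam j).trace = if i = j then 2 else 0) :
    ∀ i j, ((Sum.elim lam (fun _ : Unit => (1 : Matrix (Fin n) (Fin n) ℂ))) i *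
        (Sum.elim lam (fun _ : Unit => (1 : Matrix (Fin n) (Fin n) ℂ))) j).trace
      = if i = j then (Sum.elim (fun _ => (2:ℂ)) (fun _ => (n:ℂ))) i else 0 := by
  rintro (i | i) (j | j) <;>
    simp [horth, htr0, Matrix.trace_one, Matrix.mul_one, Matrix.one_mul,
      Sum.inl.injEq]

end helpers

/-- For a bipartite pure state ρ = |ψ⟩⟨ψ| on H_j ⊗ H_k with d_j ≤ d_k one has the exact
relation ‖T^{(jk)}‖² = 4(d_j²−1)/d_j² − (2(d_j+d_k)/(d_j d_k)) ‖T^{(j)}‖², where T^{(j)} is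
the Bloch vector of the reduced state ρ_j. -/
theorem pure_bipartite_correlation_identity (dj dk : ℕ) (hdj : 2 ≤ dj) (hjk : dj ≤ dk)
    (ρ : Matrix (Fin dj × Fin dk) (Fin dj × Fin dk) ℂ)
    (hpure : ∃ ψ : Fin dj × Fin dk → ℂ, (∑ x, ‖ψ x‖ ^ 2 = 1) ∧ ρ = vecMulVec ψ (star ψ))
    (lamJ : Fin (dj ^ 2 - 1) → Matrix (Fin dj) (Fin dj) ℂ)
    (lamK : Fin (dk ^ 2 - 1) → Matrix (Fin dk) (Fin dk) ℂ)
    (hhermJ : ∀ i, (lamJ i).IsHermitian) (hhermK : ∀ i, (lamK i).IsHermitian)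
    (htr0J : ∀ i, (lamJ i).trace = 0) (htr0K : ∀ i, (lamK i).trace = 0)
    (horthJ : ∀ i j, (lamJ i * lamJ j).trace = if i = j then 2 else 0)
    (horthK : ∀ i j, (lamK i * lamK j).trace = if i = j then 2 else 0)
    -- the reduced density matrix of the first subsystem
    (ρj : Matrix (Fin dj) (Fin dj) ℂ)
    (hρj : ∀ a b, ρj a b = ∑ c : Fin dk, ρ (a, c) (b, c)) :
    ∑ i : Fin (dj ^ 2 - 1) × Fin (dk ^ 2 - 1), ‖(ρ * (lamJ i.1 ⊗ₖ lamK i.2)).trace‖ ^ 2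
      = 4 * ((dj : ℝ) ^ 2 - 1) / (dj : ℝ) ^ 2
        - (2 * ((dj : ℝ) + (dk : ℝ)) / ((dj : ℝ) * (dk : ℝ)))
          * ∑ i, ‖(ρj * lamJ i).trace‖ ^ 2 := by
  obtain ⟨ψ, hψ, hρ⟩ := hpure
  have hdk : 2 ≤ dk := le_trans hdj hjk
  -- the matrix M with M a c = ψ (a, c)
  set M : Matrix (Fin dj) (Fin dk) ℂ := Matrix.of (fun a c => ψ (a, c)) with hM
  -- ρk : partial trace over the first factor
  set ρk : Matrix (Fin dk) (Fin dk) ℂ :=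
    Matrix.of (fun c d => ∑ a : Fin dj, ρ (a, c) (a, d)) with hρk
  have hρapp : ∀ x y, ρ x y = ψ x * star (ψ y) := by
    intro x y; rw [hρ]; simp [vecMulVec_apply]
  -- trace of ρ is 1
  have htrρ : ρ.trace = 1 := by
    have : ρ.trace = ∑ x, ((‖ψ x‖^2 : ℝ) : ℂ) := by
      simp only [Matrix.trace, Matrix.diag_apply, hρapp]
      exact Finset.sum_congr rfl fun x _ => by
        rw [mul_comm]; exact star_mul_self_eq_normsq (ψ x)
    rw [this, ← Complex.ofReal_sum, hψ, Complex.ofReal_one]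
  -- ρ is Hermitian
  have hρherm : ρ.IsHermitian := by
    show ρᴴ = ρ
    ext x y
    simp [conjTranspose_apply, hρapp, mul_comm]
  -- trace of ρ² is 1
  have htrρ2 : (ρ * ρ).trace = 1 := by
    have : (ρ * ρ).trace = ρ.trace * ρ.trace := by
      simp only [Matrix.trace, Matrix.diag_apply, Matrix.mul_apply, hρapp,
        Finset.sum_mul_sum]
      rw [Finset.sum_comm]
      refine Finset.sum_congr rfl fun x _ => Finset.sum_congr rfl fun y _ => by ring
    rw [this, htrρ, one_mul]
  -- ρj = M * Mᴴ, ρk = (Mᴴ * M)ᵀ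
  have hρjM : ρj = M * Mᴴ := by
    ext a b
    simp [hρj, Matrix.mul_apply, conjTranspose_apply, hρapp, hM]
  have hρkM : ρk = (Mᴴ * M)ᵀ := by
    ext c d
    simp [hρk, Matrix.mul_apply, conjTranspose_apply, hρapp, hM, mul_comm]
  have hρjherm : ρj.IsHermitian := hρjM ▸ isHermitian_mul_conjTranspose_self M
  have hρkherm : ρk.IsHermitian := hρkM ▸ (isHermitian_conjTranspose_mul_self M).transpose
  -- traces of reduced states
  have htrρj : ρj.trace = 1 := by
    rw [← htrρ]
    simp only [Matrix.trace, Matrix.diag_apply, hρj, Fintype.sum_prod_type]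
  have htrρk : ρk.trace = 1 := by
    rw [← htrρ]
    simp only [Matrix.trace, Matrix.diag_apply, hρk, Fintype.sum_prod_type, Matrix.of_apply]
    exact Finset.sum_comm
  -- equal purities
  have hpur : (ρj * ρj).trace = (ρk * ρk).trace := by
    rw [hρjM, hρkM, ← Matrix.transpose_mul, Matrix.trace_transpose]
    calc (M * Mᴴ * (M * Mᴴ)).trace = ((Mᴴ * (M * Mᴴ)) * M).trace := by
          rw [Matrix.mul_assoc, Matrix.trace_mul_comm]
      _ = (Mᴴ * M * (Mᴴ * M)).trace := by simp only [Matrix.mul_assoc]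
  -- partial trace identities
  have hptJ : ∀ A : Matrix (Fin dj) (Fin dj) ℂ,
      ((A ⊗ₖ (1 : Matrix (Fin dk) (Fin dk) ℂ)) * ρ).trace = (ρj * A).trace := by
    intro A
    rw [Matrix.trace_mul_comm]
    simp only [Matrix.trace, Matrix.diag_apply, Matrix.mul_apply, Fintype.sum_prod_type,
      kroneckerMap_apply, Matrix.one_apply, hρj, mul_ite, mul_one, mul_zero, ite_mul, zero_mul,
      Finset.sum_ite_eq, Finset.sum_ite_eq', Finset.mem_univ, if_true, Finset.sum_mul,
      Finset.mul_sum]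
    exact Finset.sum_congr rfl fun a _ => Finset.sum_comm
  have hptK : ∀ B : Matrix (Fin dk) (Fin dk) ℂ,
      (((1 : Matrix (Fin dj) (Fin dj) ℂ) ⊗ₖ B) * ρ).trace = (ρk * B).trace := by
    intro B
    rw [Matrix.trace_mul_comm]
    simp only [Matrix.trace, Matrix.diag_apply, Matrix.mul_apply, Fintype.sum_prod_type,
      kroneckerMap_apply, Matrix.one_apply, hρk, Matrix.of_apply, mul_ite, mul_one, mul_zero,
      ite_mul, zero_mul, one_mul, Finset.sum_ite_eq, Finset.sum_ite_eq', Finset.mem_univ,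
      if_true, Finset.sum_mul, Finset.mul_sum]
    calc (∑ a : Fin dj, ∑ c : Fin dk, ∑ b : Fin dj, ∑ d : Fin dk,
            if b = a then ρ (a, c) (b, d) * B d c else 0)
        = ∑ a : Fin dj, ∑ c : Fin dk, ∑ d : Fin dk, ρ (a, c) (a, d) * B d c := by
          refine Finset.sum_congr rfl fun a _ => Finset.sum_congr rfl fun c _ => ?_
          rw [Finset.sum_comm]
          simp only [Finset.sum_ite_eq', Finset.mem_univ, if_true]
      _ = ∑ c : Fin dk, ∑ d : Fin dk, ∑ a : Fin dj, ρ (a, c) (a, d) * B d c := by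
          rw [Finset.sum_comm]
          exact Finset.sum_congr rfl fun c _ => Finset.sum_comm
  -- single-system orthonormal families extended with identity
  have h1dj : 1 ≤ dj^2 := Nat.one_le_pow _ _ (by omega)
  have h1dk : 1 ≤ dk^2 := Nat.one_le_pow _ _ (by omega)
  have hdjC : (dj : ℂ) ≠ 0 := Nat.cast_ne_zero.mpr (by omega)
  have hdkC : (dk : ℂ) ≠ 0 := Nat.cast_ne_zero.mpr (by omega)
  set eJ : (Fin (dj^2-1) ⊕ Unit) → Matrix (Fin dj) (Fin dj) ℂ :=
    Sum.elim lamJ (fun _ => 1) with heJ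
  set cJ : (Fin (dj^2-1) ⊕ Unit) → ℂ := Sum.elim (fun _ => 2) (fun _ => (dj:ℂ)) with hcJdef
  set eK : (Fin (dk^2-1) ⊕ Unit) → Matrix (Fin dk) (Fin dk) ℂ :=
    Sum.elim lamK (fun _ => 1) with heK
  set cK : (Fin (dk^2-1) ⊕ Unit) → ℂ := Sum.elim (fun _ => 2) (fun _ => (dk:ℂ)) with hcKdef
  have hhermJ' : ∀ i, (eJ i).IsHermitian := by
    rintro (i | i)
    exacts [hhermJ i, Matrix.isHermitian_one]
  have hhermK' : ∀ i, (eK i).IsHermitian := by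
    rintro (i | i)
    exacts [hhermK i, Matrix.isHermitian_one]
  have hcJne : ∀ i, cJ i ≠ 0 := by rintro (i | i) <;> simp [hcJdef, hdjC]
  have hcKne : ∀ i, cK i ≠ 0 := by rintro (i | i) <;> simp [hcKdef, hdkC]
  have hcrJ : ∀ i, star (cJ i) = cJ i := by
    rintro (i | i) <;> simp [hcJdef, Complex.star_def, Complex.conj_natCast]
  have hcrK : ∀ i, star (cK i) = cK i := by
    rintro (i | i) <;> simp [hcKdef, Complex.star_def, Complex.conj_natCast]
  have horthJ' := elim_orth lamJ htr0J horthJ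
  have horthK' := elim_orth lamK htr0K horthK
  have hcardJ : Fintype.card (Fin (dj^2-1) ⊕ Unit)
      = Fintype.card (Fin dj) * Fintype.card (Fin dj) := by
    simp only [Fintype.card_sum, Fintype.card_fin, Fintype.card_unit]
    rw [Nat.sub_add_cancel h1dj, pow_two]
  have hcardK : Fintype.card (Fin (dk^2-1) ⊕ Unit)
      = Fintype.card (Fin dk) * Fintype.card (Fin dk) := by
    simp only [Fintype.card_sum, Fintype.card_fin, Fintype.card_unit]
    rw [Nat.sub_add_cancel h1dk, pow_two]
  -- single-system Parseval for ρj
  have hparseJ := parseval_aux eJ hhermJ' cJ hcJne hcrJ horthJ' hcardJ ρj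
  rw [hρjherm.eq, Fintype.sum_sum_type] at hparseJ
  have hparseK := parseval_aux eK hhermK' cK hcKne hcrK horthK' hcardK ρk
  rw [hρkherm.eq, Fintype.sum_sum_type] at hparseK
  -- real form
  set Sj : ℝ := ∑ i, ‖(ρj * lamJ i).trace‖^2 with hSjdef
  set Sk : ℝ := ∑ i, ‖(ρk * lamK i).trace‖^2 with hSkdef
  have hJc : (ρj * ρj).trace = ((Sj / 2 + 1/dj : ℝ) : ℂ) := by
    rw [hparseJ]
    have hterm : ∀ i, star ((eJ (Sum.inl i) * ρj).trace) * ((eJ (Sum.inl i) * ρj).trace)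
        / cJ (Sum.inl i) = ((‖(ρj * lamJ i).trace‖^2 / 2 : ℝ) : ℂ) := by
      intro i
      rw [heJ, hcJdef]
      simp only [Sum.elim_inl]
      rw [Matrix.trace_mul_comm, star_mul_self_eq_normsq]
      push_cast
      ring
    have hunit : ∀ u : Unit, star ((eJ (Sum.inr u) * ρj).trace) * ((eJ (Sum.inr u) * ρj).trace)
        / cJ (Sum.inr u) = 1 / (dj : ℂ) := by
      intro u
      rw [heJ, hcJdef]
      simp only [Sum.elim_inr, Matrix.one_mul, htrρj]
      simp
    rw [Finset.sum_congr rfl (fun i _ => hterm i), Finset.sum_congr rfl (fun u _ => hunit u)]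
    simp only [← Complex.ofReal_sum]
    rw [hSjdef]
    push_cast
    simp only [Finset.sum_div, Finset.univ_unique, Finset.sum_singleton]
    try ring
  have hKc : (ρk * ρk).trace = ((Sk / 2 + 1/dk : ℝ) : ℂ) := by
    rw [hparseK]
    have hterm : ∀ i, star ((eK (Sum.inl i) * ρk).trace) * ((eK (Sum.inl i) * ρk).trace)
        / cK (Sum.inl i) = ((‖(ρk * lamK i).trace‖^2 / 2 : ℝ) : ℂ) := by
      intro i
      rw [heK, hcKdef]
      simp only [Sum.elim_inl]
      rw [Matrix.trace_mul_comm, star_mul_self_eq_normsq]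
      push_cast
      ring
    have hunit : ∀ u : Unit, star ((eK (Sum.inr u) * ρk).trace) * ((eK (Sum.inr u) * ρk).trace)
        / cK (Sum.inr u) = 1 / (dk : ℂ) := by
      intro u
      rw [heK, hcKdef]
      simp only [Sum.elim_inr, Matrix.one_mul, htrρk]
      simp
    rw [Finset.sum_congr rfl (fun i _ => hterm i), Finset.sum_congr rfl (fun u _ => hunit u)]
    simp only [← Complex.ofReal_sum]
    rw [hSkdef]
    push_cast
    simp only [Finset.sum_div, Finset.univ_unique, Finset.sum_singleton]
    try ring
  have hpurR : Sj / 2 + 1/(dj:ℝ) = Sk / 2 + 1/(dk:ℝ) := by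
    have h := hpur
    rw [hJc, hKc] at h
    exact_mod_cast h
  -- bipartite Parseval
  set e2 : ((Fin (dj^2-1) ⊕ Unit) × (Fin (dk^2-1) ⊕ Unit))
      → Matrix (Fin dj × Fin dk) (Fin dj × Fin dk) ℂ := fun p => eJ p.1 ⊗ₖ eK p.2 with he2
  set c2 : ((Fin (dj^2-1) ⊕ Unit) × (Fin (dk^2-1) ⊕ Unit)) → ℂ :=
    fun p => cJ p.1 * cK p.2 with hc2def
  have hherm2 : ∀ p, (e2 p).IsHermitian := fun p => kron_isHermitian (hhermJ' p.1) (hhermK' p.2)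
  have hc2ne : ∀ p, c2 p ≠ 0 := fun p => mul_ne_zero (hcJne p.1) (hcKne p.2)
  have hcr2 : ∀ p, star (c2 p) = c2 p := by
    intro p
    rw [hc2def]
    simp only [star_mul']
    rw [hcrJ, hcrK, mul_comm]
  have horth2 : ∀ p q, (e2 p * e2 q).trace = if p = q then c2 p else 0 := by
    intro p q
    rw [he2, hc2def]
    simp only
    rw [← Matrix.mul_kronecker_mul, Matrix.trace_kronecker, horthJ' p.1 q.1, horthK' p.2 q.2]
    by_cases h1 : p.1 = q.1 <;> by_cases h2 : p.2 = q.2 <;>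
      simp [h1, h2, Prod.ext_iff, hcJdef, hcKdef]
  have hcard2 : Fintype.card ((Fin (dj^2-1) ⊕ Unit) × (Fin (dk^2-1) ⊕ Unit))
      = Fintype.card (Fin dj × Fin dk) * Fintype.card (Fin dj × Fin dk) := by
    simp only [Fintype.card_prod, hcardJ, hcardK, Fintype.card_fin]
    ring
  have hparse2 := parseval_aux e2 hherm2 c2 hc2ne hcr2 horth2 hcard2 ρ
  rw [hρherm.eq, htrρ2, Fintype.sum_prod_type] at hparse2
  simp only [Fintype.sum_sum_type, Finset.univ_unique, Finset.sum_singleton] at hparse2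
  simp only [he2, hc2def, heJ, hcJdef, heK, hcKdef, Sum.elim_inl, Sum.elim_inr] at hparse2
  simp only [hptJ, hptK, Matrix.one_kronecker_one, Matrix.one_mul, htrρ, star_one, one_mul,
    star_mul_self_eq_normsq, Finset.sum_add_distrib] at hparse2
  simp only [← Finset.sum_div, ← Complex.ofReal_sum] at hparse2
  set T : ℝ := ∑ x : Fin (dj^2-1), ∑ y : Fin (dk^2-1),
    ‖((lamJ x ⊗ₖ lamK y) * ρ).trace‖^2 with hTdef
  have hE1 : (1:ℝ) = T / (2*2) + Sj/(2*(dk:ℝ)) + (Sk/((dj:ℝ)*2) + 1/((dj:ℝ)*(dk:ℝ))) := by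
    rw [← hSjdef, ← hSkdef] at hparse2
    have hone : (1:ℂ)/((dj:ℂ)*(dk:ℂ)) = (((1:ℝ)/((dj:ℝ)*(dk:ℝ)):ℝ):ℂ) := by
      push_cast
      ring
    rw [hone] at hparse2
    exact_mod_cast hparse2
  have hgoalL : (∑ i : Fin (dj^2-1) × Fin (dk^2-1), ‖(ρ * (lamJ i.1 ⊗ₖ lamK i.2)).trace‖^2)
      = T := by
    rw [hTdef, Fintype.sum_prod_type]
    exact Finset.sum_congr rfl fun x _ => Finset.sum_congr rfl fun y _ => by
      rw [Matrix.trace_mul_comm]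
  have hdj0 : (dj:ℝ) ≠ 0 := Nat.cast_ne_zero.mpr (by omega)
  have hdk0 : (dk:ℝ) ≠ 0 := Nat.cast_ne_zero.mpr (by omega)
  have final : T = 4 * ((dj : ℝ) ^ 2 - 1) / (dj : ℝ) ^ 2
      - (2 * ((dj : ℝ) + (dk : ℝ)) / ((dj : ℝ) * (dk : ℝ))) * Sj := by
    field_simp at hE1 hpurR ⊢
    have h4dk : (4*(dk:ℝ)) ≠ 0 := by
      have : (0:ℝ) < dk := by exact_mod_cast (by omega : 0 < dk)
      positivity
    refine mul_right_cancel₀ h4dk ?_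
    linear_combination (-(4*(dj:ℝ)*(dk:ℝ))) * hE1 + (8*(dk:ℝ)) * hpurR
  rw [hgoalL]
  exact final
end

section
/- Let n ≥ 3 and let 2 ≤ d_1 ≤ d_2 ≤ ⋯ ≤ d_n be integers with d_n ≤ d_1⋯d_{n−1}. Then ∑_{i=1}^{n} 1/d_i² − 2/(d_1⋯d_n) ≥ (∑_{1≤i_1<⋯<i_{n−1}≤n} d_{i_1}⋯d_{i_{n−1}} − ∑_{i=1}^{n} d_i + (n−2)d_n)/(d_1⋯d_{n−1} d_n²). -/
open BigOperators

/-- For n+1 ≥ 3 dimensions 2 ≤ d_1 ≤ ⋯ ≤ d_{n+1} with d_{n+1} ≤ d_1⋯d_n one has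
∑ 1/d_i² − 2/∏ d_i ≥ (∑ products of all but one d − ∑ d_i + ((n+1)−2) d_{max})/(d_1⋯d_n d_{max}²). -/
theorem dimension_inequality (n : ℕ) (hn : 2 ≤ n) (d : Fin (n + 1) → ℝ)
    (hd2 : ∀ i, 2 ≤ d i) (hmono : Monotone d)
    (hlast : d (Fin.last n) ≤ ∏ i : Fin n, d i.castSucc) :
    (∑ i, 1 / d i ^ 2) - 2 / ∏ i, d i ≥
      ((∑ i : Fin (n + 1), ∏ j ∈ Finset.univ.erase i, d j)
          - (∑ i, d i) + ((n : ℝ) - 1) * d (Fin.last n))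
        / ((∏ i : Fin n, d i.castSucc) * d (Fin.last n) ^ 2) := by
  have hpos : ∀ i, 0 < d i := fun i => lt_of_lt_of_le two_pos (hd2 i)
  set D := d (Fin.last n) with hD
  set P := ∏ i : Fin n, d i.castSucc with hPdef
  have hPpos : 0 < P := Finset.prod_pos fun i _ => hpos _
  have hDpos : 0 < D := hpos _
  have hprod : ∏ i, d i = P * D := by
    rw [Fin.prod_univ_castSucc]
  have herase : ∀ i : Fin (n + 1), ∏ j ∈ Finset.univ.erase i, d j = (P * D) / d i := by
    intro i
    rw [eq_div_iff (hpos i).ne', ← hprod]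
    exact Finset.prod_erase_mul _ _ (Finset.mem_univ i)
  have hle : ∀ i, d i ≤ D := fun i => hmono (Fin.le_last i)
  have hsq : ∀ i, d i ^ 2 ≤ P * D := by
    intro i
    have h1 : d i ≤ P := le_trans (hle i) hlast
    have h2 : d i ≤ D := hle i
    nlinarith [hpos i]
  rw [hprod]
  rw [Finset.sum_congr rfl (fun i _ => herase i)]
  rw [ge_iff_le, div_le_iff₀ (by positivity)]
  have e1 : ((∑ i, 1 / d i ^ 2) - 2 / (P * D)) * (P * D ^ 2)
      = (∑ i, (P * D ^ 2) / d i ^ 2) - 2 * D := by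
    rw [sub_mul, Finset.sum_mul]
    congr 1
    · exact Finset.sum_congr rfl fun i _ => by rw [div_mul_eq_mul_div, one_mul]
    · field_simp
  rw [e1]
  have e2 : (∑ i, (P * D ^ 2) / d i ^ 2) - 2 * D
      - ((∑ i, (P * D) / d i) - (∑ i, d i) + ((n : ℝ) - 1) * D)
      = ∑ i : Fin (n + 1), (D - d i) * ((P * D) / d i ^ 2 - 1) := by
    have hterm : ∀ i : Fin (n + 1), (D - d i) * ((P * D) / d i ^ 2 - 1)
        = (P * D ^ 2) / d i ^ 2 - (P * D) / d i - D + d i := by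
      intro i
      have h0 : d i ≠ 0 := (hpos i).ne'
      field_simp
      ring
    rw [Finset.sum_congr rfl (fun i _ => hterm i)]
    simp only [Finset.sum_add_distrib, Finset.sum_sub_distrib, Finset.sum_const,
      Finset.card_univ, Fintype.card_fin, nsmul_eq_mul]
    push_cast
    ring
  have hnn : 0 ≤ ∑ i : Fin (n + 1), (D - d i) * ((P * D) / d i ^ 2 - 1) := by
    refine Finset.sum_nonneg fun i _ => mul_nonneg (by linarith [hle i]) ?_
    have h0 : (0:ℝ) < d i ^ 2 := pow_pos (hpos i) 2
    rw [sub_nonneg, le_div_iff₀ h0, one_mul]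
    exact hsq i
  linarith [e2 ▸ hnn, hnn]
end

section
/- Let ρ be a fully separable ((1,1,…,1)-separable) state on H_1^{d_1} ⊗ ⋯ ⊗ H_n^{d_n} with d_i ≥ 2. Then ‖T^{(12⋯n)}‖² ≤ 2^n ∏_{i=1}^n (d_i − 1)/d_i. -/
open Matrix BigOperators

/-- The Kronecker (tensor) product of a finite family of square matrices, given entrywise. -/
def famKron {ι : Type*} [Fintype ι] {dims : ι → ℕ}
    (M : ∀ k, Matrix (Fin (dims k)) (Fin (dims k)) ℂ) :
    Matrix (∀ k, Fin (dims k)) (∀ k, Fin (dims k)) ℂ :=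
  fun a b => ∏ k, M k (a k) (b k)

open scoped InnerProductSpace ComplexConjugate

noncomputable def flat {d : ℕ} (A : Matrix (Fin d) (Fin d) ℂ) :
    EuclideanSpace ℂ (Fin d × Fin d) := WithLp.toLp 2 (fun p : Fin d × Fin d => A p.1 p.2)

lemma inner_flat {d : ℕ} (A B : Matrix (Fin d) (Fin d) ℂ) :
    ⟪flat A, flat B⟫_ℂ = (Aᴴ * B).trace := by
  simp only [PiLp.inner_apply, RCLike.inner_apply, flat, Matrix.trace, Matrix.diag,
    Matrix.mul_apply, Matrix.conjTranspose_apply, Fintype.sum_prod_type, RCLike.star_def, WithLp.ofLp_toLp]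
  rw [Finset.sum_comm]
  exact Finset.sum_congr rfl fun _ _ => Finset.sum_congr rfl fun _ _ => mul_comm _ _

lemma norm_flat_sq {d : ℕ} (A : Matrix (Fin d) (Fin d) ℂ) :
    ‖flat A‖ ^ 2 = ∑ a, ∑ b, ‖A a b‖ ^ 2 := by
  rw [EuclideanSpace.norm_eq, Real.sq_sqrt (by positivity), Fintype.sum_prod_type]
  rfl

lemma single_bound {d : ℕ} (hd : 2 ≤ d)
    (lam : Fin (d ^ 2 - 1) → Matrix (Fin d) (Fin d) ℂ)
    (hherm : ∀ i, (lam i).IsHermitian)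
    (htr0 : ∀ i, (lam i).trace = 0)
    (horth : ∀ i j, (lam i * lam j).trace = if i = j then 2 else 0)
    (φ : Fin d → ℂ) (hφ : ∑ y, ‖φ y‖ ^ 2 = 1) :
    ∑ i, ‖((vecMulVec φ (star φ)) * lam i).trace‖ ^ 2 ≤ 2 * (((d : ℝ) - 1) / d) := by
  have hd0 : (0 : ℝ) < (d : ℝ) := by positivity
  set P : Matrix (Fin d) (Fin d) ℂ := vecMulVec φ (star φ) with hP
  set v : Option (Fin (d ^ 2 - 1)) → EuclideanSpace ℂ (Fin d × Fin d) :=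
    fun o => Option.elim o (((Real.sqrt d : ℂ))⁻¹ • flat 1)
      (fun i => ((Real.sqrt 2 : ℂ))⁻¹ • flat (lam i)) with hv
  have hsd : ((Real.sqrt d : ℝ) : ℂ) * ((Real.sqrt d : ℝ) : ℂ) = (d : ℂ) := by
    rw [← Complex.ofReal_mul, Real.mul_self_sqrt hd0.le]
    norm_cast
  have hs2 : ((Real.sqrt 2 : ℝ) : ℂ) * ((Real.sqrt 2 : ℝ) : ℂ) = (2 : ℂ) := by
    rw [← Complex.ofReal_mul, Real.mul_self_sqrt (by norm_num)]
    norm_num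
  have hsd0 : ((Real.sqrt d : ℝ) : ℂ) ≠ 0 := by
    simp [Real.sqrt_eq_zero', hd0, not_le, hd0.le]
    positivity
  have hs20 : ((Real.sqrt 2 : ℝ) : ℂ) ≠ 0 := by
    norm_cast
    positivity
  have hon : Orthonormal ℂ v := by
    rw [orthonormal_iff_ite]
    rintro (_ | i) (_ | j) <;>
      simp only [hv, Option.elim, inner_smul_left, inner_smul_right, inner_flat,
        Matrix.conjTranspose_one, Matrix.one_mul, Matrix.mul_one, Matrix.trace_one,
        map_inv₀, Complex.conj_ofReal]
    · simp only [if_pos, Fintype.card_fin]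
      field_simp
      rw [sq, hsd]
    · simp [htr0 j]
    · simp [Matrix.trace_conjTranspose, (hherm i).eq, htr0 i]
    · rw [(hherm i).eq, horth i j]
      by_cases h : i = j
      · subst h
        rw [if_pos rfl, if_pos rfl]
        field_simp
        rw [sq, hs2]
      · rw [if_neg h, if_neg (by simpa using h)]
        simp
  have hbessel := hon.sum_inner_products_le (s := Finset.univ) (flat P)
  have hPtr : P.trace = 1 := by
    have h1 : P.trace = ∑ a, φ a * conj (φ a) := by
      simp [hP, Matrix.trace, Matrix.diag, Matrix.vecMulVec_apply, Pi.star_apply,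
        RCLike.star_def]
    have h2 : ∀ a : Fin d, φ a * conj (φ a) = ((‖φ a‖ ^ 2 : ℝ) : ℂ) := fun a => by
      rw [Complex.mul_conj]
      norm_cast
      rw [Complex.normSq_eq_norm_sq]
    rw [h1]
    simp only [h2]
    rw [← Complex.ofReal_sum, hφ, Complex.ofReal_one]
  have hnormP : ‖flat P‖ ^ 2 = 1 := by
    rw [norm_flat_sq]
    have h3 : ∀ a b : Fin d, ‖P a b‖ ^ 2 = ‖φ a‖ ^ 2 * ‖φ b‖ ^ 2 := by
      intro a b
      simp [hP, Matrix.vecMulVec_apply, norm_mul, mul_pow]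
    simp only [h3, ← Finset.mul_sum, hφ, mul_one]
  have hnone : ‖⟪v none, flat P⟫_ℂ‖ ^ 2 = 1 / d := by
    simp only [hv, Option.elim, inner_smul_left, inner_flat, Matrix.conjTranspose_one,
      Matrix.one_mul, map_inv₀, Complex.conj_ofReal, hPtr, mul_one]
    rw [norm_inv, Complex.norm_real, Real.norm_eq_abs, abs_of_nonneg (Real.sqrt_nonneg _),
      inv_pow, Real.sq_sqrt hd0.le, one_div]
  have hsome : ∀ i, ‖⟪v (some i), flat P⟫_ℂ‖ ^ 2 = ‖(P * lam i).trace‖ ^ 2 / 2 := by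
    intro i
    simp only [hv, Option.elim, inner_smul_left, inner_flat, (hherm i).eq, map_inv₀,
      Complex.conj_ofReal, Matrix.trace_mul_comm (lam i) P]
    rw [norm_mul, mul_pow, norm_inv, Complex.norm_real, Real.norm_eq_abs,
      abs_of_nonneg (Real.sqrt_nonneg _), inv_pow, Real.sq_sqrt (by norm_num : (0:ℝ) ≤ 2)]
    ring
  rw [Fintype.sum_option, hnone, hnormP] at hbessel
  simp only [hsome] at hbessel
  rw [← Finset.sum_div] at hbessel
  have hfrac : ((d : ℝ) - 1) / d = 1 - 1 / d := by field_simp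
  rw [hfrac]
  linarith

lemma trace_factor {n : ℕ} {dims : Fin n → ℕ}
    (φ : ∀ i, Fin (dims i) → ℂ)
    (M : ∀ k, Matrix (Fin (dims k)) (Fin (dims k)) ℂ) :
    ((vecMulVec (fun x : ∀ k, Fin (dims k) => ∏ i, φ i (x i))
        (star fun x : ∀ k, Fin (dims k) => ∏ i, φ i (x i))) * famKron M).trace
      = ∏ k, ((vecMulVec (φ k) (star (φ k))) * M k).trace := by
  classical
  have hrhs : ∀ k, ((vecMulVec (φ k) (star (φ k))) * M k).trace
      = ∑ a, ∑ b, φ k a * (conj (φ k b) * M k b a) := by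
    intro k
    simp only [Matrix.trace, Matrix.diag, Matrix.mul_apply, Matrix.vecMulVec_apply,
      Pi.star_apply, RCLike.star_def, mul_assoc]
  calc ((vecMulVec (fun x : ∀ k, Fin (dims k) => ∏ i, φ i (x i))
        (star fun x : ∀ k, Fin (dims k) => ∏ i, φ i (x i))) * famKron M).trace
      = ∑ x : ∀ k, Fin (dims k), ∑ y : ∀ k, Fin (dims k),
          ∏ i, (φ i (x i) * (conj (φ i (y i)) * M i (y i) (x i))) := by
        simp only [Matrix.trace, Matrix.diag, Matrix.mul_apply, Matrix.vecMulVec_apply,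
          Pi.star_apply, RCLike.star_def, map_prod, famKron]
        refine Finset.sum_congr rfl fun x _ => Finset.sum_congr rfl fun y _ => ?_
        rw [Finset.prod_mul_distrib, Finset.prod_mul_distrib]
        ring
    _ = ∑ x : ∀ k, Fin (dims k), ∏ i, ∑ b, (φ i (x i) * (conj (φ i b) * M i b (x i))) := by
        refine Finset.sum_congr rfl fun x _ => ?_
        exact (Fintype.prod_sum fun i b => φ i (x i) * (conj (φ i b) * M i b (x i))).symm
    _ = ∏ k, ∑ a, ∑ b, (φ k a * (conj (φ k b) * M k b a)) := by
        rw [Fintype.prod_sum]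
    _ = ∏ k, ((vecMulVec (φ k) (star (φ k))) * M k).trace := by
        exact Finset.prod_congr rfl fun k _ => (hrhs k).symm

lemma sq_sum_le {N : ℕ} (p : Fin N → ℝ) (a : Fin N → ℝ) (hp : ∀ m, 0 ≤ p m)
    (hps : ∑ m, p m = 1) :
    (∑ m, p m * a m) ^ 2 ≤ ∑ m, p m * a m ^ 2 := by
  have h := Finset.sum_mul_sq_le_sq_mul_sq Finset.univ (fun m => Real.sqrt (p m))
    (fun m => Real.sqrt (p m) * a m)
  have h1 : ∀ m : Fin N, Real.sqrt (p m) * (Real.sqrt (p m) * a m) = p m * a m := by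
    intro m
    rw [← mul_assoc, Real.mul_self_sqrt (hp m)]
  have h2 : ∀ m : Fin N, Real.sqrt (p m) ^ 2 = p m := fun m => Real.sq_sqrt (hp m)
  have h3 : ∀ m : Fin N, (Real.sqrt (p m) * a m) ^ 2 = p m * a m ^ 2 := by
    intro m
    rw [mul_pow, h2]
  simp only [h1, h2, h3, hps, one_mul] at h
  exact h


/-- For a fully separable ((1,…,1)-separable) n-partite state,
‖T^{(12⋯n)}‖² ≤ 2ⁿ ∏_i (d_i − 1)/d_i. -/
theorem fully_separable_correlation_bound (n : ℕ) (dims : Fin n → ℕ)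
    (hd2 : ∀ i, 2 ≤ dims i)
    (ρ : Matrix (∀ k, Fin (dims k)) (∀ k, Fin (dims k)) ℂ)
    (hsep : ∃ (N : ℕ) (p : Fin N → ℝ) (φ : Fin N → ∀ i, Fin (dims i) → ℂ),
        (∀ k, 0 < p k) ∧ (∑ k, p k = 1) ∧
        (∀ k i, ∑ y, ‖φ k i y‖ ^ 2 = 1) ∧
        ρ = ∑ k, (p k : ℂ) •
          vecMulVec (fun x => ∏ i, φ k i (x i)) (star fun x => ∏ i, φ k i (x i)))
    (lam : ∀ k, Fin (dims k ^ 2 - 1) → Matrix (Fin (dims k)) (Fin (dims k)) ℂ)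
    (hherm : ∀ k i, (lam k i).IsHermitian)
    (htr0 : ∀ k i, (lam k i).trace = 0)
    (horth : ∀ k i j, (lam k i * lam k j).trace = if i = j then 2 else 0) :
    ∑ i : ∀ k, Fin (dims k ^ 2 - 1),
        ‖(ρ * famKron fun k => lam k (i k)).trace‖ ^ 2
      ≤ 2 ^ n * ∏ i, ((dims i : ℝ) - 1) / (dims i : ℝ) := by
  classical
  obtain ⟨N, p, φ, hp, hpsum, hunit, hρ⟩ := hsep
  subst hρ
  set T : ∀ _ : Fin N, ∀ k : Fin n, Fin (dims k ^ 2 - 1) → ℝ :=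
    fun m k j => ‖((vecMulVec (φ m k) (star (φ m k))) * lam k j).trace‖ with hT
  have key : ∀ i : ∀ k, Fin (dims k ^ 2 - 1),
      ((∑ m, (p m : ℂ) • vecMulVec (fun x : ∀ k, Fin (dims k) => ∏ l, φ m l (x l))
          (star fun x : ∀ k, Fin (dims k) => ∏ l, φ m l (x l))) * famKron fun k => lam k (i k)).trace
        = ∑ m, (p m : ℂ) *
            ∏ k, ((vecMulVec (φ m k) (star (φ m k))) * lam k (i k)).trace := by
    intro i
    rw [Matrix.sum_mul, Matrix.trace_sum]
    refine Finset.sum_congr rfl fun m _ => ?_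
    rw [Matrix.smul_mul, Matrix.trace_smul, smul_eq_mul, trace_factor]
  calc ∑ i : ∀ k, Fin (dims k ^ 2 - 1),
        ‖((∑ m, (p m : ℂ) • vecMulVec (fun x : ∀ k, Fin (dims k) => ∏ l, φ m l (x l))
          (star fun x : ∀ k, Fin (dims k) => ∏ l, φ m l (x l))) * famKron fun k => lam k (i k)).trace‖ ^ 2
      ≤ ∑ i : ∀ k, Fin (dims k ^ 2 - 1), ∑ m, p m * ∏ k, (T m k (i k)) ^ 2 := by
        refine Finset.sum_le_sum fun i _ => ?_
        rw [key i]
        have h1 : ‖∑ m, (p m : ℂ) *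
            ∏ k, ((vecMulVec (φ m k) (star (φ m k))) * lam k (i k)).trace‖
            ≤ ∑ m, p m * ∏ k, T m k (i k) := by
          refine (norm_sum_le _ _).trans (le_of_eq (Finset.sum_congr rfl fun m _ => ?_))
          rw [norm_mul, Complex.norm_real, Real.norm_eq_abs, abs_of_nonneg (hp m).le,
            norm_prod]
        have h2 := sq_sum_le p (fun m => ∏ k, T m k (i k)) (fun m => (hp m).le) hpsum
        calc ‖∑ m, (p m : ℂ) *
            ∏ k, ((vecMulVec (φ m k) (star (φ m k))) * lam k (i k)).trace‖ ^ 2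
            ≤ (∑ m, p m * ∏ k, T m k (i k)) ^ 2 := by
              refine pow_le_pow_left₀ (norm_nonneg _) h1 2
          _ ≤ ∑ m, p m * (∏ k, T m k (i k)) ^ 2 := h2
          _ = ∑ m, p m * ∏ k, (T m k (i k)) ^ 2 := by
              simp [← Finset.prod_pow]
    _ = ∑ m, p m * ∏ k, ∑ j, (T m k j) ^ 2 := by
        rw [Finset.sum_comm]
        refine Finset.sum_congr rfl fun m _ => ?_
        rw [← Finset.mul_sum]
        congr 1
        exact (Fintype.prod_sum fun k j => (T m k j) ^ 2).symm
    _ ≤ ∑ m, p m * ∏ k, (2 * (((dims k : ℝ) - 1) / (dims k : ℝ))) := by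
        refine Finset.sum_le_sum fun m _ => ?_
        refine mul_le_mul_of_nonneg_left ?_ (hp m).le
        refine Finset.prod_le_prod (fun k _ => Finset.sum_nonneg fun j _ => sq_nonneg _)
          (fun k _ => ?_)
        exact single_bound (hd2 k) (lam k) (hherm k) (htr0 k) (horth k) (φ m k) (hunit m k)
    _ = 2 ^ n * ∏ i, ((dims i : ℝ) - 1) / (dims i : ℝ) := by
        rw [← Finset.sum_mul, hpsum, one_mul, Finset.prod_mul_distrib, Finset.prod_const,
          Finset.card_univ, Fintype.card_fin]
end

section
/- For the 5-qubit state ρ = x(|ψ⟩⟨ψ| + |φ⟩⟨φ|) + ((1−2x)/32) I_{32}, where |ψ⟩ = (|00000⟩+|11111⟩)/√2 and |φ⟩ = (|00001⟩+|00010⟩+|00100⟩+|01000⟩)/2, the squared norm of the full correlation tensor (with Pauli matrices σ_1, σ_2, σ_3 as SU(2) generators) is ‖T^{(12345)}‖² = ∑_{i_1,…,i_5=1}^{3} (Tr(ρ σ_{i_1}⊗⋯⊗σ_{i_5}))² = 20x². -/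
open Matrix BigOperators

/-- The three Pauli matrices σ₁, σ₂, σ₃. -/
def pauli : Fin 3 → Matrix (Fin 2) (Fin 2) ℂ :=
  ![!![0, 1; 1, 0], !![0, -Complex.I; Complex.I, 0], !![1, 0; 0, -1]]

/-- The standard basis state |w⟩ of five qubits, as a vector. -/
def basisVec (w : Fin 5 → Fin 2) : (Fin 5 → Fin 2) → ℂ := fun v => if v = w then 1 else 0

lemma pauli_trace (j : Fin 3) : ∑ r : Fin 2, pauli j r r = 0 := by
  fin_cases j <;> simp [pauli, Fin.sum_univ_two]

lemma traceP (i : Fin 5 → Fin 3) :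
    (famKron (dims := fun _ : Fin 5 => 2) fun k => pauli (i k)).trace = 0 := by
  have h : (famKron (dims := fun _ : Fin 5 => 2) fun k => pauli (i k)).trace
      = ∏ k : Fin 5, ∑ r : Fin 2, pauli (i k) r r := by
    rw [Finset.prod_univ_sum]
    simp [Matrix.trace, Matrix.diag, famKron, Fintype.piFinset_univ]
  rw [h]
  exact Finset.prod_eq_zero (Finset.mem_univ 0) (pauli_trace _)

lemma trace_vmv (v w : (Fin 5 → Fin 2) → ℂ) (P : Matrix (Fin 5 → Fin 2) (Fin 5 → Fin 2) ℂ) :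
    (vecMulVec v w * P).trace = ∑ a, ∑ b, v a * w b * P b a := by
  simp [Matrix.trace, Matrix.diag, Matrix.mul_apply, vecMulVec_apply]

def pauliZ : Fin 3 → Matrix (Fin 2) (Fin 2) GaussianInt :=
  ![!![0, 1; 1, 0], !![0, -⟨0,1⟩; ⟨0,1⟩, 0], !![1, 0; 0, -1]]

lemma pauli_eq (j : Fin 3) (r c : Fin 2) :
    pauli j r c = GaussianInt.toComplex (pauliZ j r c) := by
  fin_cases j <;> fin_cases r <;> fin_cases c <;>
    simp [pauli, pauliZ, GaussianInt.toComplex_def]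

def KZ (i : Fin 5 → Fin 3) (b a : Fin 5 → Fin 2) : GaussianInt :=
  ∏ k, pauliZ (i k) (b k) (a k)

lemma famKron_eq (i : Fin 5 → Fin 3) (b a : Fin 5 → Fin 2) :
    famKron (dims := fun _ : Fin 5 => 2) (fun k => pauli (i k)) b a
      = GaussianInt.toComplex (KZ i b a) := by
  simp [famKron, KZ, pauli_eq, map_prod]

def w0 : Fin 5 → Fin 2 := fun _ => 0
def w1 : Fin 5 → Fin 2 := fun _ => 1
def ee (k : Fin 5) : Fin 5 → Fin 2 := fun j => if j = k then 1 else 0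

def hInt (i : Fin 5 → Fin 3) : GaussianInt :=
  2 * (KZ i w0 w0 + KZ i w0 w1 + KZ i w1 w0 + KZ i w1 w1)
  + ∑ a : Fin 4, ∑ b : Fin 4, KZ i (ee (![4,3,2,1] b)) (ee (![4,3,2,1] a))

set_option maxHeartbeats 1000000 in
lemma key (x : ℝ) (i : Fin 5 → Fin 3)
    (ψ φ : (Fin 5 → Fin 2) → ℂ)
    (hψ : ψ = fun v => ((Real.sqrt 2 : ℝ) : ℂ)⁻¹ *
        (basisVec (fun _ => 0) v + basisVec (fun _ => 1) v))
    (hφ : φ = fun v => (1 / 2 : ℂ) *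
        (basisVec (fun j => if j = 4 then 1 else 0) v
          + basisVec (fun j => if j = 3 then 1 else 0) v
          + basisVec (fun j => if j = 2 then 1 else 0) v
          + basisVec (fun j => if j = 1 then 1 else 0) v))
    (ρ : Matrix (Fin 5 → Fin 2) (Fin 5 → Fin 2) ℂ)
    (hρ : ρ = (x : ℂ) • (vecMulVec ψ (star ψ) + vecMulVec φ (star φ))
        + (((1 - 2 * x) / 32 : ℝ) : ℂ) • (1 : Matrix (Fin 5 → Fin 2) (Fin 5 → Fin 2) ℂ)) :
    (ρ * famKron (dims := fun _ : Fin 5 => 2) fun k => pauli (i k)).trace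
      = (x : ℂ) * GaussianInt.toComplex (hInt i) / 4 := by
  have h2 : ((Real.sqrt 2 : ℝ) : ℂ)⁻¹ * ((Real.sqrt 2 : ℝ) : ℂ)⁻¹ = (2 : ℂ)⁻¹ := by
    rw [← mul_inv, ← Complex.ofReal_mul, Real.mul_self_sqrt (by norm_num)]
    norm_num
  subst hψ hφ hρ
  rw [add_mul, smul_mul_assoc, smul_mul_assoc, one_mul, add_mul,
    Matrix.trace_add, Matrix.trace_smul, Matrix.trace_smul, traceP, smul_zero, add_zero,
    Matrix.trace_add, trace_vmv, trace_vmv]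
  simp only [Pi.star_apply, Complex.star_def, _root_.map_mul, map_add, map_inv₀,
    Complex.conj_ofReal, _root_.map_one, map_ofNat, map_div₀, basisVec,
    apply_ite (starRingEnd ℂ), map_zero, famKron_eq]
  simp only [mul_add, add_mul, ite_mul, zero_mul, one_mul, mul_ite, mul_zero, mul_one,
    Finset.sum_add_distrib, Finset.sum_ite_eq, Finset.sum_ite_eq', Finset.mem_univ, if_true]
  simp only [hInt, Fin.sum_univ_four, map_add, _root_.map_mul, map_ofNat, Matrix.cons_val_zero,
    Matrix.cons_val_one, Matrix.head_cons, Matrix.cons_val_two, Matrix.tail_cons,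
    Matrix.cons_val_three]
  rw [smul_eq_mul]
  have e0 : (fun (_ : Fin 5) => (0 : Fin 2)) = w0 := rfl
  have e1 : (fun (_ : Fin 5) => (1 : Fin 2)) = w1 := rfl
  have e4 : (fun (j : Fin 5) => if j = 4 then (1 : Fin 2) else 0) = ee 4 := rfl
  have e3 : (fun (j : Fin 5) => if j = 3 then (1 : Fin 2) else 0) = ee 3 := rfl
  have e2' : (fun (j : Fin 5) => if j = 2 then (1 : Fin 2) else 0) = ee 2 := rfl
  have e1' : (fun (j : Fin 5) => if j = 1 then (1 : Fin 2) else 0) = ee 1 := rfl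
  rw [e0, e1, e4, e3, e2', e1']
  have h2' : ((Real.sqrt 2 : ℝ) : ℂ) ^ 2 = 2 := by
    rw [← Complex.ofReal_pow, Real.sq_sqrt (by norm_num)]
    norm_num
  field_simp
  ring_nf
  rw [h2']
  ring

set_option maxRecDepth 100000 in
set_option maxHeartbeats 4000000 in
lemma sum_norm' : ∑ a : Fin 3, ∑ b : Fin 3, ∑ c : Fin 3, ∑ d : Fin 3, ∑ e : Fin 3,
    (hInt ![a,b,c,d,e]).norm = 320 := by decide

def tupEquiv : (Fin 3 × Fin 3 × Fin 3 × Fin 3 × Fin 3) ≃ (Fin 5 → Fin 3) where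
  toFun p := ![p.1, p.2.1, p.2.2.1, p.2.2.2.1, p.2.2.2.2]
  invFun i := (i 0, i 1, i 2, i 3, i 4)
  left_inv p := rfl
  right_inv i := by funext k; fin_cases k <;> rfl

lemma sum_norm : ∑ i : Fin 5 → Fin 3, (hInt i).norm = 320 := by
  rw [← Equiv.sum_comp tupEquiv (fun i => (hInt i).norm)]
  rw [Fintype.sum_prod_type, ]
  simp only [Fintype.sum_prod_type, tupEquiv, Equiv.coe_fn_mk]
  exact sum_norm'

/-- For the 5-qubit state ρ = x(|ψ⟩⟨ψ| + |φ⟩⟨φ|) + ((1−2x)/32)I with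
|ψ⟩ = (|00000⟩+|11111⟩)/√2 and |φ⟩ = (|00001⟩+|00010⟩+|00100⟩+|01000⟩)/2, the squared
norm of the full correlation tensor equals 20x². -/
theorem example1_correlation_norm (x : ℝ) (hx0 : 0 ≤ x) (hx : x ≤ 1 / 2)
    (ψ φ : (Fin 5 → Fin 2) → ℂ)
    (hψ : ψ = fun v => ((Real.sqrt 2 : ℝ) : ℂ)⁻¹ *
        (basisVec (fun _ => 0) v + basisVec (fun _ => 1) v))
    (hφ : φ = fun v => (1 / 2 : ℂ) *
        (basisVec (fun j => if j = 4 then 1 else 0) v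
          + basisVec (fun j => if j = 3 then 1 else 0) v
          + basisVec (fun j => if j = 2 then 1 else 0) v
          + basisVec (fun j => if j = 1 then 1 else 0) v))
    (ρ : Matrix (Fin 5 → Fin 2) (Fin 5 → Fin 2) ℂ)
    (hρ : ρ = (x : ℂ) • (vecMulVec ψ (star ψ) + vecMulVec φ (star φ))
        + (((1 - 2 * x) / 32 : ℝ) : ℂ) • (1 : Matrix (Fin 5 → Fin 2) (Fin 5 → Fin 2) ℂ)) :
    ∑ i : Fin 5 → Fin 3,
        ‖(ρ * famKron (dims := fun _ : Fin 5 => 2) fun k => pauli (i k)).trace‖ ^ 2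
      = 20 * x ^ 2 := by
  have step : ∀ i : Fin 5 → Fin 3,
      ‖(ρ * famKron (dims := fun _ : Fin 5 => 2) fun k => pauli (i k)).trace‖ ^ 2
        = ((hInt i).norm : ℝ) * (x ^ 2 / 16) := by
    intro i
    rw [key x i ψ φ hψ hφ ρ hρ, Complex.sq_norm,
      Complex.normSq_div, Complex.normSq_mul, Complex.normSq_ofReal,
      ← GaussianInt.intCast_real_norm]
    have h4 : Complex.normSq 4 = 16 := by
      norm_num [Complex.normSq_apply]
    rw [h4]
    ring
  rw [Finset.sum_congr rfl (fun i _ => step i), ← Finset.sum_mul]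
  have : (∑ i : Fin 5 → Fin 3, ((hInt i).norm : ℝ)) = ((320 : ℤ) : ℝ) := by
    rw [← Int.cast_sum, sum_norm]
  rw [this]
  norm_num
  ring
end

section
/- For the state ρ = x|ψ⟩⟨ψ| + ((1−x)/120) I_{120} on ℂ²⊗ℂ³⊗ℂ⁴⊗ℂ⁵, where |ψ⟩ = (|0⟩|0⟩|0⟩|4⟩ + |1⟩|0⟩|0⟩|0⟩)/√2, the squared norm of the full correlation tensor is ‖T^{(1234)}‖² = ∑_{i_1=1}^{3}∑_{i_2=1}^{8}∑_{i_3=1}^{15}∑_{i_4=1}^{24} (Tr(ρ λ_{i_1}⊗λ_{i_2}⊗λ_{i_3}⊗λ_{i_4}))² = 6x². -/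
open Matrix BigOperators

/-- The four-fold Kronecker (tensor) product of square matrices, given entrywise. -/
def kron4 {d1 d2 d3 d4 : ℕ} (M1 : Matrix (Fin d1) (Fin d1) ℂ) (M2 : Matrix (Fin d2) (Fin d2) ℂ)
    (M3 : Matrix (Fin d3) (Fin d3) ℂ) (M4 : Matrix (Fin d4) (Fin d4) ℂ) :
    Matrix (Fin d1 × Fin d2 × Fin d3 × Fin d4) (Fin d1 × Fin d2 × Fin d3 × Fin d4) ℂ :=
  fun a b => M1 a.1 b.1 * M2 a.2.1 b.2.1 * M3 a.2.2.1 b.2.2.1 * M4 a.2.2.2 b.2.2.2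

lemma complete_rel {d n : ℕ} (hd : 0 < d) (hdn : n + 1 = d * d)
    (lam : Fin n → Matrix (Fin d) (Fin d) ℂ)
    (htr : ∀ i, (lam i).trace = 0)
    (horth : ∀ i j, (lam i * lam j).trace = if i = j then 2 else 0)
    (a b p q : Fin d) :
    ∑ i, lam i a b * lam i p q
      = 2 * ((if q = a then (1:ℂ) else 0) * (if p = b then (1:ℂ) else 0))
        - (2 / d) * ((if a = b then (1:ℂ) else 0) * (if q = p then (1:ℂ) else 0)) := by
  classical
  set F : Fin (n+1) → Matrix (Fin d) (Fin d) ℂ := Fin.cons 1 lam with hF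
  have hdC : (d : ℂ) ≠ 0 := Nat.cast_ne_zero.mpr hd.ne'
  have horthF : ∀ i j, (F i * F j).trace = if i = j then (if i = 0 then (d:ℂ) else 2) else 0 := by
    intro i j
    induction i using Fin.cases with
    | zero =>
      induction j using Fin.cases with
      | zero => simp [hF, Matrix.trace_one]
      | succ j' => simp [hF, (Fin.succ_ne_zero j').symm, htr j']
    | succ i' =>
      induction j using Fin.cases with
      | zero => simp [hF, Fin.succ_ne_zero i', htr i']
      | succ j' => simp [hF, horth i' j', Fin.succ_inj, Fin.succ_ne_zero]
  have hli : LinearIndependent ℂ F := by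
    rw [linearIndependent_iff']
    intro s g hsum j hj
    have h := congrArg (fun M => (F j * M).trace) hsum
    simp only [Finset.mul_sum, Matrix.mul_smul, Matrix.trace_sum, Matrix.trace_smul, horthF,
      Matrix.mul_zero, Matrix.trace_zero, smul_eq_mul, mul_ite, mul_zero] at h
    rw [Finset.sum_ite_eq] at h
    rw [if_pos hj] at h
    by_cases hj0 : j = 0
    · rw [if_pos hj0] at h
      exact (mul_eq_zero.mp h).resolve_right hdC
    · rw [if_neg hj0] at h
      exact (mul_eq_zero.mp h).resolve_right two_ne_zero
  have hcard : Fintype.card (Fin (n+1)) = Module.finrank ℂ (Matrix (Fin d) (Fin d) ℂ) := by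
    simp [Module.finrank_matrix, hdn]
  let B := basisOfLinearIndependentOfCardEqFinrank hli hcard
  have hB : ∀ i, B i = F i := fun i =>
    congrFun (coe_basisOfLinearIndependentOfCardEqFinrank hli hcard) i
  set E : Matrix (Fin d) (Fin d) ℂ := Matrix.single q p 1 with hE
  have hsum : ∑ i, B.repr E i • F i = E := by
    conv_rhs => rw [← B.sum_repr E]
    exact Finset.sum_congr rfl fun i _ => by rw [hB]
  have hrep : ∀ j, B.repr E j * (if j = 0 then (d:ℂ) else 2) = (F j * E).trace := by
    intro j
    have h := congrArg (fun M => (F j * M).trace) hsum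
    simp only [Finset.mul_sum, Matrix.mul_smul, Matrix.trace_sum, Matrix.trace_smul, horthF,
      smul_eq_mul, mul_ite, mul_zero] at h
    rw [Finset.sum_ite_eq, if_pos (Finset.mem_univ j)] at h
    rw [← h]
    split <;> rfl
  have htrE : ∀ M : Matrix (Fin d) (Fin d) ℂ, (M * E).trace = M p q := by
    intro M
    simp [hE, Matrix.trace, Matrix.mul_apply, Matrix.single, Matrix.diag,
      ite_and, Finset.sum_ite_eq]
  have hrep0 : B.repr E 0 = (if q = p then (1:ℂ) else 0) / d := by
    have h := hrep 0
    rw [if_pos rfl, htrE] at h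
    have h2 : (1 : Matrix (Fin d) (Fin d) ℂ) p q = if q = p then (1:ℂ) else 0 := by
      simp [hF, Matrix.one_apply, eq_comm]
    simp only [hF, Fin.cons_zero] at h
    rw [h2] at h
    field_simp
    linear_combination h
  have hreps : ∀ i : Fin n, B.repr E i.succ = lam i p q / 2 := by
    intro i
    have h := hrep i.succ
    rw [if_neg (Fin.succ_ne_zero i), htrE] at h
    simp only [hF, Fin.cons_succ] at h
    field_simp
    linear_combination h
  have hent := congrFun (congrFun hsum a) b
  rw [Fin.sum_univ_succ] at hent
  simp only [Matrix.add_apply, Matrix.smul_apply, Matrix.sum_apply, smul_eq_mul, hrep0, hreps,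
    hF, Fin.cons_zero, Fin.cons_succ, Matrix.one_apply] at hent
  simp only [hE, Matrix.single, Matrix.of_apply] at hent
  have hs2 : ∑ i, lam i p q / 2 * lam i a b = (∑ i, lam i a b * lam i p q) / 2 := by
    rw [Finset.sum_div]
    exact Finset.sum_congr rfl fun i _ => by ring
  rw [hs2] at hent
  have haux : (if q = a ∧ p = b then (1:ℂ) else 0)
      = (if q = a then (1:ℂ) else 0) * (if p = b then (1:ℂ) else 0) := by
    by_cases h1 : q = a <;> by_cases h2 : p = b <;> simp [h1, h2]
  rw [haux] at hent
  linear_combination (2 : ℂ) * hent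

lemma sum_factor4 {n1 n2 n3 n4 : ℕ} (f : Fin n1 → ℂ) (g : Fin n2 → ℂ) (h : Fin n3 → ℂ)
    (k : Fin n4 → ℂ) :
    ∑ i : Fin n1 × Fin n2 × Fin n3 × Fin n4, f i.1 * g i.2.1 * h i.2.2.1 * k i.2.2.2
      = (∑ j, f j) * (∑ j, g j) * (∑ j, h j) * (∑ j, k j) := by
  simp only [Fintype.sum_prod_type, ← Finset.sum_mul, ← Finset.mul_sum]

lemma real_sq_of_self_conj (z : ℂ) (hz : (starRingEnd ℂ) z = z) :
    ((‖z‖ : ℝ) : ℂ) ^ 2 = z ^ 2 := by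
  have h := Complex.mul_conj z
  rw [hz, ← sq] at h
  rw [h]
  norm_cast
  rw [Complex.normSq_eq_norm_sq]

set_option maxHeartbeats 1000000 in
/-- For the state ρ = x|ψ⟩⟨ψ| + ((1−x)/120)I on ℂ²⊗ℂ³⊗ℂ⁴⊗ℂ⁵ with
|ψ⟩ = (|0004⟩ + |1000⟩)/√2, and any complete orthogonal families of Hermitian traceless
generators (as the generalized Gell-Mann matrices are), ‖T^{(1234)}‖² = 6x². -/
theorem example2_correlation_norm (x : ℝ) (hx0 : 0 ≤ x) (hx : x ≤ 1)
    (ψ : Fin 2 × Fin 3 × Fin 4 × Fin 5 → ℂ)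
    (hψ : ψ = fun p => ((Real.sqrt 2 : ℝ) : ℂ)⁻¹ *
        ((if p = ((0 : Fin 2), (0 : Fin 3), (0 : Fin 4), (4 : Fin 5)) then 1 else 0)
          + (if p = ((1 : Fin 2), (0 : Fin 3), (0 : Fin 4), (0 : Fin 5)) then 1 else 0)))
    (ρ : Matrix (Fin 2 × Fin 3 × Fin 4 × Fin 5) (Fin 2 × Fin 3 × Fin 4 × Fin 5) ℂ)
    (hρ : ρ = (x : ℂ) • vecMulVec ψ (star ψ)
        + (((1 - x) / 120 : ℝ) : ℂ) • (1 : Matrix (Fin 2 × Fin 3 × Fin 4 × Fin 5)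
            (Fin 2 × Fin 3 × Fin 4 × Fin 5) ℂ))
    (lam1 : Fin 3 → Matrix (Fin 2) (Fin 2) ℂ)
    (lam2 : Fin 8 → Matrix (Fin 3) (Fin 3) ℂ)
    (lam3 : Fin 15 → Matrix (Fin 4) (Fin 4) ℂ)
    (lam4 : Fin 24 → Matrix (Fin 5) (Fin 5) ℂ)
    (hherm1 : ∀ i, (lam1 i).IsHermitian) (hherm2 : ∀ i, (lam2 i).IsHermitian)
    (hherm3 : ∀ i, (lam3 i).IsHermitian) (hherm4 : ∀ i, (lam4 i).IsHermitian)
    (htr01 : ∀ i, (lam1 i).trace = 0) (htr02 : ∀ i, (lam2 i).trace = 0)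
    (htr03 : ∀ i, (lam3 i).trace = 0) (htr04 : ∀ i, (lam4 i).trace = 0)
    (horth1 : ∀ i j, (lam1 i * lam1 j).trace = if i = j then 2 else 0)
    (horth2 : ∀ i j, (lam2 i * lam2 j).trace = if i = j then 2 else 0)
    (horth3 : ∀ i j, (lam3 i * lam3 j).trace = if i = j then 2 else 0)
    (horth4 : ∀ i j, (lam4 i * lam4 j).trace = if i = j then 2 else 0) :
    ∑ i : Fin 3 × Fin 8 × Fin 15 × Fin 24,
        ‖(ρ * kron4 (lam1 i.1) (lam2 i.2.1) (lam3 i.2.2.1) (lam4 i.2.2.2)).trace‖ ^ 2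
      = 6 * x ^ 2 := by
  classical
  subst hρ hψ
  -- abbreviation for the correlation function
  set T : Fin 3 × Fin 8 × Fin 15 × Fin 24 → ℂ := fun i =>
      lam1 i.1 0 0 * lam2 i.2.1 0 0 * lam3 i.2.2.1 0 0 * lam4 i.2.2.2 4 4
      + lam1 i.1 1 0 * lam2 i.2.1 0 0 * lam3 i.2.2.1 0 0 * lam4 i.2.2.2 0 4
      + lam1 i.1 0 1 * lam2 i.2.1 0 0 * lam3 i.2.2.1 0 0 * lam4 i.2.2.2 4 0
      + lam1 i.1 1 1 * lam2 i.2.1 0 0 * lam3 i.2.2.1 0 0 * lam4 i.2.2.2 0 0 with hT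
  -- trace of kron4 vanishes
  have htrK : ∀ (i1 : Fin 3) (i2 : Fin 8) (i3 : Fin 15) (i4 : Fin 24),
      (kron4 (lam1 i1) (lam2 i2) (lam3 i3) (lam4 i4)).trace = 0 := by
    intro i1 i2 i3 i4
    have h4 : ∑ j, lam4 i4 j j = 0 := by simpa [Matrix.trace, Matrix.diag] using htr04 i4
    calc (kron4 (lam1 i1) (lam2 i2) (lam3 i3) (lam4 i4)).trace
        = ∑ i : Fin 2 × Fin 3 × Fin 4 × Fin 5,
            lam1 i1 i.1 i.1 * lam2 i2 i.2.1 i.2.1 * lam3 i3 i.2.2.1 i.2.2.1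
              * lam4 i4 i.2.2.2 i.2.2.2 := by
          simp [Matrix.trace, Matrix.diag, kron4]
      _ = (∑ a, lam1 i1 a a) * (∑ b, lam2 i2 b b) * (∑ c, lam3 i3 c c)
            * (∑ j, lam4 i4 j j) :=
          sum_factor4 (fun a => lam1 i1 a a) (fun b => lam2 i2 b b)
            (fun c => lam3 i3 c c) (fun j => lam4 i4 j j)
      _ = 0 := by rw [h4, mul_zero]
  -- trace of the pure part
  have hs2 : ((Real.sqrt 2 : ℝ) : ℂ)⁻¹ * ((Real.sqrt 2 : ℝ) : ℂ)⁻¹ = (2:ℂ)⁻¹ := by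
    rw [← mul_inv]
    have : ((Real.sqrt 2 : ℝ) : ℂ) * ((Real.sqrt 2 : ℝ) : ℂ) = 2 := by
      norm_cast
      exact Real.mul_self_sqrt (by norm_num)
    rw [this]
  have hkey : ∀ (K : Matrix (Fin 2 × Fin 3 × Fin 4 × Fin 5) (Fin 2 × Fin 3 × Fin 4 × Fin 5) ℂ),
      (vecMulVec (fun p => ((Real.sqrt 2 : ℝ) : ℂ)⁻¹ *
        ((if p = ((0 : Fin 2), (0 : Fin 3), (0 : Fin 4), (4 : Fin 5)) then 1 else 0)
          + (if p = ((1 : Fin 2), (0 : Fin 3), (0 : Fin 4), (0 : Fin 5)) then 1 else 0)))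
        (star fun p => ((Real.sqrt 2 : ℝ) : ℂ)⁻¹ *
        ((if p = ((0 : Fin 2), (0 : Fin 3), (0 : Fin 4), (4 : Fin 5)) then 1 else 0)
          + (if p = ((1 : Fin 2), (0 : Fin 3), (0 : Fin 4), (0 : Fin 5)) then 1 else 0))) * K).trace
      = (2:ℂ)⁻¹ *
        (K (0, 0, 0, 4) (0, 0, 0, 4) + K (1, 0, 0, 0) (0, 0, 0, 4)
          + K (0, 0, 0, 4) (1, 0, 0, 0) + K (1, 0, 0, 0) (1, 0, 0, 0)) := by
    intro K
    simp only [Matrix.trace, Matrix.diag, Matrix.mul_apply, Matrix.vecMulVec_apply,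
      Pi.star_apply, Complex.star_def, _root_.map_mul, map_add, map_inv₀, _root_.map_one,
      _root_.map_zero, apply_ite (starRingEnd ℂ), Complex.conj_ofReal, mul_add, add_mul,
      ite_mul, mul_ite, mul_zero, zero_mul, mul_one, one_mul, Finset.sum_add_distrib,
      Finset.sum_ite_eq, Finset.sum_ite_eq', Finset.mem_univ, if_true]
    ring_nf
    rw [show ((Real.sqrt 2 : ℝ) : ℂ)⁻¹ ^ 2 = (2:ℂ)⁻¹ from by rw [sq]; exact hs2]
    ring
  -- the trace formula
  have ht : ∀ i : Fin 3 × Fin 8 × Fin 15 × Fin 24,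
      ((((x : ℝ) : ℂ) • vecMulVec (fun p => ((Real.sqrt 2 : ℝ) : ℂ)⁻¹ *
        ((if p = ((0 : Fin 2), (0 : Fin 3), (0 : Fin 4), (4 : Fin 5)) then 1 else 0)
          + (if p = ((1 : Fin 2), (0 : Fin 3), (0 : Fin 4), (0 : Fin 5)) then 1 else 0)))
        (star fun p => ((Real.sqrt 2 : ℝ) : ℂ)⁻¹ *
        ((if p = ((0 : Fin 2), (0 : Fin 3), (0 : Fin 4), (4 : Fin 5)) then 1 else 0)
          + (if p = ((1 : Fin 2), (0 : Fin 3), (0 : Fin 4), (0 : Fin 5)) then 1 else 0)))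
        + (((1 - x) / 120 : ℝ) : ℂ) • (1 : Matrix (Fin 2 × Fin 3 × Fin 4 × Fin 5)
            (Fin 2 × Fin 3 × Fin 4 × Fin 5) ℂ))
        * kron4 (lam1 i.1) (lam2 i.2.1) (lam3 i.2.2.1) (lam4 i.2.2.2)).trace
      = (x : ℂ) * (2:ℂ)⁻¹ * T i := by
    intro i
    rw [Matrix.add_mul, Matrix.smul_mul, Matrix.smul_mul, Matrix.one_mul, Matrix.trace_add,
      Matrix.trace_smul, Matrix.trace_smul, htrK, hkey]
    simp only [smul_eq_mul, mul_zero, add_zero, hT, kron4]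
    ring
  -- hermiticity of entries
  have hc1 : ∀ (i : Fin 3) (a b : Fin 2), (starRingEnd ℂ) (lam1 i a b) = lam1 i b a := by
    intro i a b
    have h := congrFun (congrFun (hherm1 i) b) a
    rwa [Matrix.conjTranspose_apply] at h
  have hc2 : ∀ (i : Fin 8) (a b : Fin 3), (starRingEnd ℂ) (lam2 i a b) = lam2 i b a := by
    intro i a b
    have h := congrFun (congrFun (hherm2 i) b) a
    rwa [Matrix.conjTranspose_apply] at h
  have hc3 : ∀ (i : Fin 15) (a b : Fin 4), (starRingEnd ℂ) (lam3 i a b) = lam3 i b a := by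
    intro i a b
    have h := congrFun (congrFun (hherm3 i) b) a
    rwa [Matrix.conjTranspose_apply] at h
  have hc4 : ∀ (i : Fin 24) (a b : Fin 5), (starRingEnd ℂ) (lam4 i a b) = lam4 i b a := by
    intro i a b
    have h := congrFun (congrFun (hherm4 i) b) a
    rwa [Matrix.conjTranspose_apply] at h
  have hconj : ∀ i, (starRingEnd ℂ) ((x : ℂ) * (2:ℂ)⁻¹ * T i) = (x : ℂ) * (2:ℂ)⁻¹ * T i := by
    intro i
    simp only [hT, map_add, _root_.map_mul, map_inv₀, map_ofNat, Complex.conj_ofReal,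
      hc1, hc2, hc3, hc4]
    ring
  -- single-party completeness relations
  have hA := complete_rel (by norm_num) (by norm_num : 3 + 1 = 2 * 2) lam1 htr01 horth1
  have hB := complete_rel (by norm_num) (by norm_num : 8 + 1 = 3 * 3) lam2 htr02 horth2
  have hC := complete_rel (by norm_num) (by norm_num : 15 + 1 = 4 * 4) lam3 htr03 horth3
  have hD := complete_rel (by norm_num) (by norm_num : 24 + 1 = 5 * 5) lam4 htr04 horth4
  have hfac : ∀ (a b c d : Fin 2) (v w y z : Fin 5),
      ∑ i : Fin 3 × Fin 8 × Fin 15 × Fin 24,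
        (lam1 i.1 a b * lam1 i.1 c d) * (lam2 i.2.1 0 0 * lam2 i.2.1 0 0)
          * (lam3 i.2.2.1 0 0 * lam3 i.2.2.1 0 0) * (lam4 i.2.2.2 v w * lam4 i.2.2.2 y z)
      = (∑ j, lam1 j a b * lam1 j c d) * (∑ j, lam2 j 0 0 * lam2 j 0 0)
          * (∑ j, lam3 j 0 0 * lam3 j 0 0) * (∑ j, lam4 j v w * lam4 j y z) :=
    fun a b c d v w y z => sum_factor4 (fun j => lam1 j a b * lam1 j c d)
      (fun j => lam2 j 0 0 * lam2 j 0 0) (fun j => lam3 j 0 0 * lam3 j 0 0)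
      (fun j => lam4 j v w * lam4 j y z)
  have hexp : ∀ i : Fin 3 × Fin 8 × Fin 15 × Fin 24,
      ((x : ℂ) * (2:ℂ)⁻¹ * T i) ^ 2 = (x:ℂ)^2 / 4 *
      ((lam1 i.1 0 0 * lam1 i.1 0 0) * (lam2 i.2.1 0 0 * lam2 i.2.1 0 0)
          * (lam3 i.2.2.1 0 0 * lam3 i.2.2.1 0 0) * (lam4 i.2.2.2 4 4 * lam4 i.2.2.2 4 4)
      + (lam1 i.1 0 0 * lam1 i.1 1 0) * (lam2 i.2.1 0 0 * lam2 i.2.1 0 0)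
          * (lam3 i.2.2.1 0 0 * lam3 i.2.2.1 0 0) * (lam4 i.2.2.2 4 4 * lam4 i.2.2.2 0 4)
      + (lam1 i.1 0 0 * lam1 i.1 0 1) * (lam2 i.2.1 0 0 * lam2 i.2.1 0 0)
          * (lam3 i.2.2.1 0 0 * lam3 i.2.2.1 0 0) * (lam4 i.2.2.2 4 4 * lam4 i.2.2.2 4 0)
      + (lam1 i.1 0 0 * lam1 i.1 1 1) * (lam2 i.2.1 0 0 * lam2 i.2.1 0 0)
          * (lam3 i.2.2.1 0 0 * lam3 i.2.2.1 0 0) * (lam4 i.2.2.2 4 4 * lam4 i.2.2.2 0 0)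
      + (lam1 i.1 1 0 * lam1 i.1 0 0) * (lam2 i.2.1 0 0 * lam2 i.2.1 0 0)
          * (lam3 i.2.2.1 0 0 * lam3 i.2.2.1 0 0) * (lam4 i.2.2.2 0 4 * lam4 i.2.2.2 4 4)
      + (lam1 i.1 1 0 * lam1 i.1 1 0) * (lam2 i.2.1 0 0 * lam2 i.2.1 0 0)
          * (lam3 i.2.2.1 0 0 * lam3 i.2.2.1 0 0) * (lam4 i.2.2.2 0 4 * lam4 i.2.2.2 0 4)
      + (lam1 i.1 1 0 * lam1 i.1 0 1) * (lam2 i.2.1 0 0 * lam2 i.2.1 0 0)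
          * (lam3 i.2.2.1 0 0 * lam3 i.2.2.1 0 0) * (lam4 i.2.2.2 0 4 * lam4 i.2.2.2 4 0)
      + (lam1 i.1 1 0 * lam1 i.1 1 1) * (lam2 i.2.1 0 0 * lam2 i.2.1 0 0)
          * (lam3 i.2.2.1 0 0 * lam3 i.2.2.1 0 0) * (lam4 i.2.2.2 0 4 * lam4 i.2.2.2 0 0)
      + (lam1 i.1 0 1 * lam1 i.1 0 0) * (lam2 i.2.1 0 0 * lam2 i.2.1 0 0)
          * (lam3 i.2.2.1 0 0 * lam3 i.2.2.1 0 0) * (lam4 i.2.2.2 4 0 * lam4 i.2.2.2 4 4)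
      + (lam1 i.1 0 1 * lam1 i.1 1 0) * (lam2 i.2.1 0 0 * lam2 i.2.1 0 0)
          * (lam3 i.2.2.1 0 0 * lam3 i.2.2.1 0 0) * (lam4 i.2.2.2 4 0 * lam4 i.2.2.2 0 4)
      + (lam1 i.1 0 1 * lam1 i.1 0 1) * (lam2 i.2.1 0 0 * lam2 i.2.1 0 0)
          * (lam3 i.2.2.1 0 0 * lam3 i.2.2.1 0 0) * (lam4 i.2.2.2 4 0 * lam4 i.2.2.2 4 0)
      + (lam1 i.1 0 1 * lam1 i.1 1 1) * (lam2 i.2.1 0 0 * lam2 i.2.1 0 0)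
          * (lam3 i.2.2.1 0 0 * lam3 i.2.2.1 0 0) * (lam4 i.2.2.2 4 0 * lam4 i.2.2.2 0 0)
      + (lam1 i.1 1 1 * lam1 i.1 0 0) * (lam2 i.2.1 0 0 * lam2 i.2.1 0 0)
          * (lam3 i.2.2.1 0 0 * lam3 i.2.2.1 0 0) * (lam4 i.2.2.2 0 0 * lam4 i.2.2.2 4 4)
      + (lam1 i.1 1 1 * lam1 i.1 1 0) * (lam2 i.2.1 0 0 * lam2 i.2.1 0 0)
          * (lam3 i.2.2.1 0 0 * lam3 i.2.2.1 0 0) * (lam4 i.2.2.2 0 0 * lam4 i.2.2.2 0 4)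
      + (lam1 i.1 1 1 * lam1 i.1 0 1) * (lam2 i.2.1 0 0 * lam2 i.2.1 0 0)
          * (lam3 i.2.2.1 0 0 * lam3 i.2.2.1 0 0) * (lam4 i.2.2.2 0 0 * lam4 i.2.2.2 4 0)
      + (lam1 i.1 1 1 * lam1 i.1 1 1) * (lam2 i.2.1 0 0 * lam2 i.2.1 0 0)
          * (lam3 i.2.2.1 0 0 * lam3 i.2.2.1 0 0) * (lam4 i.2.2.2 0 0 * lam4 i.2.2.2 0 0)) := by
    intro i
    simp only [hT]
    ring
  have hsum6 : ∑ i : Fin 3 × Fin 8 × Fin 15 × Fin 24, ((x : ℂ) * (2:ℂ)⁻¹ * T i) ^ 2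
      = 6 * (x : ℂ) ^ 2 := by
    rw [Finset.sum_congr rfl (fun i _ => hexp i), ← Finset.mul_sum]
    simp only [Finset.sum_add_distrib, hfac, hA, hB, hC, hD]
    norm_num [show ((0:Fin 5) = 4) = False from by decide,
      show ((4:Fin 5) = 0) = False from by decide]
    try ring
  have hcast : ((∑ i : Fin 3 × Fin 8 × Fin 15 × Fin 24,
      ‖((((x : ℝ) : ℂ) • vecMulVec (fun p => ((Real.sqrt 2 : ℝ) : ℂ)⁻¹ *
        ((if p = ((0 : Fin 2), (0 : Fin 3), (0 : Fin 4), (4 : Fin 5)) then 1 else 0)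
          + (if p = ((1 : Fin 2), (0 : Fin 3), (0 : Fin 4), (0 : Fin 5)) then 1 else 0)))
        (star fun p => ((Real.sqrt 2 : ℝ) : ℂ)⁻¹ *
        ((if p = ((0 : Fin 2), (0 : Fin 3), (0 : Fin 4), (4 : Fin 5)) then 1 else 0)
          + (if p = ((1 : Fin 2), (0 : Fin 3), (0 : Fin 4), (0 : Fin 5)) then 1 else 0)))
        + (((1 - x) / 120 : ℝ) : ℂ) • (1 : Matrix (Fin 2 × Fin 3 × Fin 4 × Fin 5)
            (Fin 2 × Fin 3 × Fin 4 × Fin 5) ℂ))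
        * kron4 (lam1 i.1) (lam2 i.2.1) (lam3 i.2.2.1) (lam4 i.2.2.2)).trace‖ ^ 2 : ℝ) : ℂ)
      = ∑ i : Fin 3 × Fin 8 × Fin 15 × Fin 24, ((x : ℂ) * (2:ℂ)⁻¹ * T i) ^ 2 := by
    rw [Complex.ofReal_sum]
    refine Finset.sum_congr rfl fun i _ => ?_
    rw [Complex.ofReal_pow, ht i]
    exact real_sq_of_self_conj _ (hconj i)
  have hfin := hcast.trans hsum6
  exact_mod_cast hfin
end
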